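/- Let V be a finite type and f : Finset V → ℝ normalized, non-decreasing, and submodular, with f({v}) > 0 for every v ∈ V, and curvature κ := κ_f satisfying κ < 1. Let n ≥ 1 agents have pairwise disjoint nonempty action sets 𝒱 : Fin n → Finset V. For each round t = 1, …, T let a_t : Fin n → V with a_t i ∈ 𝒱 i, and let N_t : Fin n → Finset (Fin n) with i ∉ N_t i; let b : Fin n → V with b i ∈ 𝒱 i. Write A_t for the image of a_t, B for the image of b, and S_{t,i} := {a_t j : j ∈ N_t i}. Then Σ_{t=1}^{T} f(A_t) ≥ ((1 − κ)/(1 + κ − κ²)) · [ T·f(B) + Σ_{t=1}^{T} Σ_{i=1}^{n} I_f(a_t i; S_{t,i}) − Σ_{i=1}^{n} ( max_{v ∈ 𝒱 i} Σ_{t=1}^{T} f(v | S_{t,i}) − Σ_{t=1}^{T} f(a_t i | S_{t,i}) ) ]. -/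

import Mathlib

/-- Marginal gain `f(s | A) = f(A ∪ {s}) - f A`. -/
noncomputable def marg {V : Type*} [DecidableEq V] (f : Finset V → ℝ) (s : V) (A : Finset V) : ℝ :=
  f (insert s A) - f A

/-- Submodular mutual information `I_f(a ; S) = f({a}) - f(a | S)`. -/
noncomputable def smi {V : Type*} [DecidableEq V] (f : Finset V → ℝ) (a : V) (S : Finset V) : ℝ :=
  f {a} - marg f a S

/-- Curvature `κ_f = 1 - min_{v ∈ V} (f(V) - f(V \ {v})) / f({v})`. -/
noncomputable def curvature {V : Type*} [Fintype V] [Nonempty V] [DecidableEq V]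
    (f : Finset V → ℝ) : ℝ :=
  1 - Finset.univ.inf' Finset.univ_nonempty
        (fun v => (f Finset.univ - f (Finset.univ \ {v})) / f {v})

section Aux
variable {V : Type*} [DecidableEq V] (f : Finset V → ℝ)

lemma telescope_upper {ι : Type*} [DecidableEq ι]
    (hsubmod : ∀ A B : Finset V, A ⊆ B → ∀ s : V, marg f s B ≤ marg f s A)
    (g : ι → V) (S : ι → Finset V) (A : Finset V) (hS : ∀ i, S i ⊆ A) :
    ∀ J : Finset ι, f (A ∪ J.image g) ≤ f A + ∑ i ∈ J, marg f (g i) (S i) := by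
  intro J
  induction J using Finset.induction_on with
  | empty => simp
  | @insert j s hj ih =>
    rw [Finset.image_insert, Finset.union_insert, Finset.sum_insert hj]
    have h1 : marg f (g j) (A ∪ s.image g) ≤ marg f (g j) (S j) :=
      hsubmod (S j) (A ∪ s.image g) ((hS j).trans Finset.subset_union_left) (g j)
    have e : f (insert (g j) (A ∪ s.image g))
        = f (A ∪ s.image g) + marg f (g j) (A ∪ s.image g) := by unfold marg; ring
    linarith

lemma telescope_lower {ι : Type*} [DecidableEq ι] (c' : ℝ)
    (hc : ∀ (v : V) (A : Finset V), v ∉ A → c' * f {v} ≤ marg f v A)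
    (g : ι → V) (C : Finset V) :
    ∀ J : Finset ι, (∀ i ∈ J, ∀ j ∈ J, g i = g j → i = j) → (∀ i ∈ J, g i ∉ C) →
      f C + c' * ∑ i ∈ J, f {g i} ≤ f (C ∪ J.image g) := by
  intro J
  induction J using Finset.induction_on with
  | empty => intro _ _; simp
  | @insert j s hj ih =>
    intro hinj hC
    have hnotmem : g j ∉ C ∪ s.image g := by
      intro h
      rcases Finset.mem_union.1 h with h | h
      · exact hC j (Finset.mem_insert_self _ _) h
      · obtain ⟨k, hk, hkj⟩ := Finset.mem_image.1 h
        exact hj ((hinj j (Finset.mem_insert_self _ _) k (Finset.mem_insert_of_mem hk)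
          hkj.symm) ▸ hk)
    have h1 := hc (g j) (C ∪ s.image g) hnotmem
    have h2 := ih (fun i hi j' hj' => hinj i (Finset.mem_insert_of_mem hi) j'
      (Finset.mem_insert_of_mem hj')) (fun i hi => hC i (Finset.mem_insert_of_mem hi))
    have e : f (insert (g j) (C ∪ s.image g))
        = f (C ∪ s.image g) + marg f (g j) (C ∪ s.image g) := by unfold marg; ring
    rw [Finset.image_insert, Finset.union_insert, Finset.sum_insert hj]
    linarith

end Aux

section Curv
variable {V : Type*} [Fintype V] [Nonempty V] [DecidableEq V] (f : Finset V → ℝ)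

lemma curv_key (hsubmod : ∀ A B : Finset V, A ⊆ B → ∀ s : V, marg f s B ≤ marg f s A)
    (hpos : ∀ v : V, 0 < f {v}) :
    ∀ (v : V) (A : Finset V), v ∉ A → (1 - curvature f) * f {v} ≤ marg f v A := by
  intro v A hv
  have h1 : (1 - curvature f) ≤ (f Finset.univ - f (Finset.univ \ {v})) / f {v} := by
    have : 1 - curvature f = Finset.univ.inf' Finset.univ_nonempty
        (fun v => (f Finset.univ - f (Finset.univ \ {v})) / f {v}) := by
      unfold curvature; ring
    rw [this]
    exact Finset.inf'_le _ (Finset.mem_univ v)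
  have h2 : (1 - curvature f) * f {v} ≤ f Finset.univ - f (Finset.univ \ {v}) :=
    (le_div_iff₀ (hpos v)).1 h1
  have h3 : f Finset.univ - f (Finset.univ \ {v}) = marg f v (Finset.univ \ {v}) := by
    unfold marg
    rw [Finset.sdiff_singleton_eq_erase, Finset.insert_erase (Finset.mem_univ v)]
  have h4 : marg f v (Finset.univ \ {v}) ≤ marg f v A := by
    apply hsubmod
    intro x hx
    rw [Finset.mem_sdiff, Finset.mem_singleton]
    exact ⟨Finset.mem_univ x, fun h => hv (h ▸ hx)⟩
  linarith

lemma curvature_nonneg (hnorm : f ∅ = 0)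
    (hsubmod : ∀ A B : Finset V, A ⊆ B → ∀ s : V, marg f s B ≤ marg f s A)
    (hpos : ∀ v : V, 0 < f {v}) : 0 ≤ curvature f := by
  obtain ⟨v⟩ := ‹Nonempty V›
  have h1 : Finset.univ.inf' Finset.univ_nonempty
      (fun v => (f Finset.univ - f (Finset.univ \ {v})) / f {v})
      ≤ (f Finset.univ - f (Finset.univ \ {v})) / f {v} :=
    Finset.inf'_le _ (Finset.mem_univ v)
  have h2 : marg f v (Finset.univ \ {v}) ≤ marg f v ∅ :=
    hsubmod ∅ _ (Finset.empty_subset _) v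
  have h3 : f Finset.univ - f (Finset.univ \ {v}) = marg f v (Finset.univ \ {v}) := by
    unfold marg
    rw [Finset.sdiff_singleton_eq_erase, Finset.insert_erase (Finset.mem_univ v)]
  have h4 : marg f v ∅ = f {v} := by unfold marg; simp [hnorm]
  have h5 : (f Finset.univ - f (Finset.univ \ {v})) / f {v} ≤ 1 := by
    rw [div_le_one (hpos v)]; linarith
  unfold curvature
  linarith

end Curv

lemma round_bound {V : Type*} [Fintype V] [Nonempty V] [DecidableEq V]
    (f : Finset V → ℝ)
    (hmono : ∀ A B : Finset V, A ⊆ B → f A ≤ f B)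
    (hsubmod : ∀ A B : Finset V, A ⊆ B → ∀ s : V, marg f s B ≤ marg f s A)
    (hpos : ∀ v : V, 0 < f {v})
    (n : ℕ) (𝒱 : Fin n → Finset V)
    (h𝒱disj : ∀ i j : Fin n, i ≠ j → Disjoint (𝒱 i) (𝒱 j))
    (a b : Fin n → V) (ha : ∀ i, a i ∈ 𝒱 i) (hb : ∀ i, b i ∈ 𝒱 i)
    (N : Fin n → Finset (Fin n)) (hN : ∀ i, i ∉ N i) :
    f (Finset.univ.image b) + (1 - curvature f) * ∑ i, f {a i}
      ≤ f (Finset.univ.image a) + ∑ i, marg f (b i) ((N i).image a) := by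
  have hkey := curv_key f hsubmod hpos
  have hainj : ∀ i j : Fin n, a i = a j → i = j := by
    intro i j h
    by_contra hne
    exact Finset.disjoint_left.1 (h𝒱disj i j hne) (ha i) (h ▸ ha j)
  set Ec : Finset (Fin n) := Finset.univ.filter (fun i => ¬ (a i = b i)) with hEc
  set E : Finset (Fin n) := Finset.univ.filter (fun i => a i = b i) with hE
  -- part on E
  have hEpart : (1 - curvature f) * ∑ i ∈ E, f {a i}
      ≤ ∑ i ∈ E, marg f (b i) ((N i).image a) := by
    rw [Finset.mul_sum]
    apply Finset.sum_le_sum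
    intro i hi
    have hieq : a i = b i := (Finset.mem_filter.1 hi).2
    have hnm : a i ∉ (N i).image a := by
      intro h
      obtain ⟨k, hk, hki⟩ := Finset.mem_image.1 h
      exact hN i ((hainj k i hki) ▸ hk)
    have := hkey (a i) ((N i).image a) hnm
    rw [← hieq]; exact this
  -- lower telescope on Ec
  have hlow : f (Finset.univ.image b) + (1 - curvature f) * ∑ i ∈ Ec, f {a i}
      ≤ f (Finset.univ.image b ∪ Ec.image a) := by
    apply telescope_lower f (1 - curvature f) hkey a (Finset.univ.image b) Ec
    · intro i _ j _ h; exact hainj i j h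
    · intro i hi h
      obtain ⟨k, _, hk⟩ := Finset.mem_image.1 h
      by_cases hik : k = i
      · exact (Finset.mem_filter.1 hi).2 (hik ▸ hk.symm)
      · exact Finset.disjoint_left.1 (h𝒱disj i k (Ne.symm hik)) (ha i) (hk ▸ hb k)
  -- middle monotonicity
  have hmid : f (Finset.univ.image b ∪ Ec.image a)
      ≤ f (Finset.univ.image a ∪ Ec.image b) := by
    apply hmono
    intro x hx
    rcases Finset.mem_union.1 hx with h | h
    · obtain ⟨i, _, hi⟩ := Finset.mem_image.1 h
      by_cases hieq : a i = b i
      · exact Finset.mem_union_left _ (hi ▸ hieq ▸ Finset.mem_image_of_mem a (Finset.mem_univ i))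
      · exact Finset.mem_union_right _ (hi ▸ Finset.mem_image_of_mem b
          (Finset.mem_filter.2 ⟨Finset.mem_univ i, hieq⟩))
    · obtain ⟨i, _, hi⟩ := Finset.mem_image.1 h
      exact Finset.mem_union_left _ (hi ▸ Finset.mem_image_of_mem a (Finset.mem_univ i))
  -- upper telescope on Ec
  have hup : f (Finset.univ.image a ∪ Ec.image b)
      ≤ f (Finset.univ.image a) + ∑ i ∈ Ec, marg f (b i) ((N i).image a) := by
    apply telescope_upper f hsubmod b (fun i => (N i).image a) (Finset.univ.image a)
    intro i
    exact Finset.image_subset_image (Finset.subset_univ _)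
  have hsplit1 : ∑ i ∈ E, f {a i} + ∑ i ∈ Ec, f {a i} = ∑ i, f {a i} :=
    Finset.sum_filter_add_sum_filter_not Finset.univ _ _
  have hsplit2 : ∑ i ∈ E, marg f (b i) ((N i).image a)
      + ∑ i ∈ Ec, marg f (b i) ((N i).image a) = ∑ i, marg f (b i) ((N i).image a) :=
    Finset.sum_filter_add_sum_filter_not Finset.univ _ _
  rw [← hsplit1, ← hsplit2, mul_add]
  linarith

/-- Proposition 1 of the paper in deterministic form. -/
theorem action_coordination_bound {V : Type*} [Fintype V] [Nonempty V] [DecidableEq V]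
    (f : Finset V → ℝ)
    (hnorm : f ∅ = 0)
    (hmono : ∀ A B : Finset V, A ⊆ B → f A ≤ f B)
    (hsubmod : ∀ A B : Finset V, A ⊆ B → ∀ s : V, marg f s B ≤ marg f s A)
    (hpos : ∀ v : V, 0 < f {v})
    (hκ : curvature f < 1)
    (n : ℕ) (hn : 1 ≤ n)
    (𝒱 : Fin n → Finset V)
    (h𝒱ne : ∀ i : Fin n, (𝒱 i).Nonempty)
    (h𝒱disj : ∀ i j : Fin n, i ≠ j → Disjoint (𝒱 i) (𝒱 j))
    (T : ℕ)
    (a : Fin T → Fin n → V) (ha : ∀ (t : Fin T) (i : Fin n), a t i ∈ 𝒱 i)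
    (N : Fin T → Fin n → Finset (Fin n)) (hN : ∀ (t : Fin T) (i : Fin n), i ∉ N t i)
    (b : Fin n → V) (hb : ∀ i : Fin n, b i ∈ 𝒱 i) :
    ∑ t : Fin T, f (Finset.univ.image (a t)) ≥
      ((1 - curvature f) / (1 + curvature f - curvature f ^ 2)) *
        ((T : ℝ) * f (Finset.univ.image b)
          + ∑ t : Fin T, ∑ i : Fin n, smi f (a t i) ((N t i).image (a t))
          - ∑ i : Fin n,
              ((𝒱 i).sup' (h𝒱ne i) (fun v => ∑ t : Fin T, marg f v ((N t i).image (a t)))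
                - ∑ t : Fin T, marg f (a t i) ((N t i).image (a t)))) := by
  set κ := curvature f with hκdef
  have hκ0 : 0 ≤ κ := curvature_nonneg f hnorm hsubmod hpos
  have hden : (0:ℝ) < 1 + κ - κ^2 := by nlinarith
  have hc0 : (0:ℝ) ≤ (1 - κ) / (1 + κ - κ^2) := div_nonneg (by linarith) hden.le
  have hF0 : ∀ t : Fin T, 0 ≤ f (Finset.univ.image (a t)) := by
    intro t
    have := hmono ∅ (Finset.univ.image (a t)) (Finset.empty_subset _)
    linarith [this, hnorm.le, hnorm.ge]
  have hainj : ∀ (t : Fin T) (i j : Fin n), a t i = a t j → i = j := by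
    intro t i j h
    by_contra hne
    exact Finset.disjoint_left.1 (h𝒱disj i j hne) (ha t i) (h ▸ ha t j)
  -- (1-κ) * P t ≤ F t
  have hP : ∀ t : Fin T, (1 - κ) * ∑ i, f {a t i} ≤ f (Finset.univ.image (a t)) := by
    intro t
    have := telescope_lower f (1 - κ) (curv_key f hsubmod hpos) (a t) ∅ Finset.univ
      (fun i _ j _ h => hainj t i j h) (fun i _ h => (Finset.notMem_empty _ h))
    rwa [hnorm, Finset.empty_union, zero_add] at this
  have hround : ∀ t : Fin T,
      f (Finset.univ.image b) + (1 - κ) * ∑ i, f {a t i}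
        ≤ f (Finset.univ.image (a t)) + ∑ i, marg f (b i) ((N t i).image (a t)) :=
    fun t => round_bound f hmono hsubmod hpos n 𝒱 h𝒱disj (a t) b (ha t) hb (N t) (hN t)
  -- Step A
  have hA : (T : ℝ) * f (Finset.univ.image b)
      + ∑ t : Fin T, ∑ i : Fin n, smi f (a t i) ((N t i).image (a t))
      - ∑ i : Fin n,
          ((𝒱 i).sup' (h𝒱ne i) (fun v => ∑ t : Fin T, marg f v ((N t i).image (a t)))
            - ∑ t : Fin T, marg f (a t i) ((N t i).image (a t)))
      ≤ ∑ t : Fin T, (f (Finset.univ.image (a t)) + κ * ∑ i, f {a t i}) := by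
    have hsup : ∑ i : Fin n, ∑ t : Fin T, marg f (b i) ((N t i).image (a t))
        ≤ ∑ i : Fin n, (𝒱 i).sup' (h𝒱ne i)
            (fun v => ∑ t : Fin T, marg f v ((N t i).image (a t))) :=
      Finset.sum_le_sum (fun i _ => Finset.le_sup' (fun v => ∑ t : Fin T, marg f v ((N t i).image (a t))) (hb i))
    have hstep : (T : ℝ) * f (Finset.univ.image b)
        + ∑ t : Fin T, ∑ i : Fin n, smi f (a t i) ((N t i).image (a t))
        - ∑ i : Fin n, ∑ t : Fin T, marg f (b i) ((N t i).image (a t))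
        + ∑ i : Fin n, ∑ t : Fin T, marg f (a t i) ((N t i).image (a t))
        ≤ ∑ t : Fin T, (f (Finset.univ.image (a t)) + κ * ∑ i, f {a t i}) := by
      rw [Finset.sum_comm (f := fun i t => marg f (b i) ((N t i).image (a t))),
          Finset.sum_comm (f := fun i t => marg f (a t i) ((N t i).image (a t)))]
      have hTG : (T : ℝ) * f (Finset.univ.image b)
          = ∑ _t : Fin T, f (Finset.univ.image b) := by
        rw [Finset.sum_const, Finset.card_univ, Fintype.card_fin, nsmul_eq_mul]
      rw [hTG]
      have hper : ∀ t : Fin T, f (Finset.univ.image b)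
          + ∑ i : Fin n, smi f (a t i) ((N t i).image (a t))
          - ∑ i : Fin n, marg f (b i) ((N t i).image (a t))
          + ∑ i : Fin n, marg f (a t i) ((N t i).image (a t))
          ≤ f (Finset.univ.image (a t)) + κ * ∑ i, f {a t i} := by
        intro t
        have hsm : ∑ i : Fin n, smi f (a t i) ((N t i).image (a t))
            + ∑ i : Fin n, marg f (a t i) ((N t i).image (a t))
            = ∑ i : Fin n, f {a t i} := by
          rw [← Finset.sum_add_distrib]
          apply Finset.sum_congr rfl
          intro i _
          simp [smi]
        have hmul : (1 - κ) * ∑ i, f {a t i} + κ * ∑ i, f {a t i} = ∑ i, f {a t i} := by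
          ring
        linarith [hround t]
      have hsum := Finset.sum_le_sum (fun t (_ : t ∈ Finset.univ) => hper t)
      have hid : ∑ t : Fin T, (f (Finset.univ.image b)
          + ∑ i : Fin n, smi f (a t i) ((N t i).image (a t))
          - ∑ i : Fin n, marg f (b i) ((N t i).image (a t))
          + ∑ i : Fin n, marg f (a t i) ((N t i).image (a t)))
          = ∑ _t : Fin T, f (Finset.univ.image b)
          + ∑ t : Fin T, ∑ i : Fin n, smi f (a t i) ((N t i).image (a t))
          - ∑ t : Fin T, ∑ i : Fin n, marg f (b i) ((N t i).image (a t))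
          + ∑ t : Fin T, ∑ i : Fin n, marg f (a t i) ((N t i).image (a t)) := by
        rw [Finset.sum_add_distrib, Finset.sum_sub_distrib, Finset.sum_add_distrib]
      linarith [hsum, hid]
    have hreg : ∑ i : Fin n,
          ((𝒱 i).sup' (h𝒱ne i) (fun v => ∑ t : Fin T, marg f v ((N t i).image (a t)))
            - ∑ t : Fin T, marg f (a t i) ((N t i).image (a t)))
        = ∑ i : Fin n, (𝒱 i).sup' (h𝒱ne i)
            (fun v => ∑ t : Fin T, marg f v ((N t i).image (a t)))
          - ∑ i : Fin n, ∑ t : Fin T, marg f (a t i) ((N t i).image (a t)) :=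
      Finset.sum_sub_distrib _ _
    linarith
  -- Step B
  have hB : ((1 - κ) / (1 + κ - κ^2))
        * ∑ t : Fin T, (f (Finset.univ.image (a t)) + κ * ∑ i, f {a t i})
      ≤ ∑ t : Fin T, f (Finset.univ.image (a t)) := by
    rw [Finset.mul_sum]
    apply Finset.sum_le_sum
    intro t _
    rw [div_mul_eq_mul_div, div_le_iff₀ hden]
    nlinarith [hP t, hF0 t, mul_le_mul_of_nonneg_left (hP t) hκ0,
      mul_nonneg hκ0 (hF0 t), mul_nonneg (mul_nonneg hκ0 (by linarith : (0:ℝ) ≤ 1 - κ)) (hF0 t)]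
  exact le_trans (mul_le_mul_of_nonneg_left hA hc0) hB
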